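/- Let d, T be positive integers, λ ≥ 1, and x_1, …, x_T ∈ ℝ^d with ‖x_t‖_2 ≤ 1 for every t. With V_0 = λ I_d and V_t = λ I_d + ∑_{s=1}^t x_s x_sᵀ, one has ∑_{t=1}^T ‖x_t‖²_{V_{t-1}^{-1}} ≤ 2 log( det(V_T) / det(λ I_d) ). -/

import Mathlib

open Matrix Finset

/-- `‖z‖_W := √(zᵀ W z)` for a `d × d` real matrix `W`. -/
noncomputable def matNorm {d : ℕ} (W : Matrix (Fin d) (Fin d) ℝ) (z : Fin d → ℝ) : ℝ :=
  Real.sqrt (z ⬝ᵥ (W *ᵥ z))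

lemma vecMulVec_quad {d : ℕ} (x y : Fin d → ℝ) :
    y ⬝ᵥ (vecMulVec x x *ᵥ y) = (x ⬝ᵥ y) ^ 2 := by
  simp only [vecMulVec, mulVec, dotProduct, of_apply, Finset.mul_sum, Finset.sum_mul]
  rw [Finset.sum_comm]
  simp [sq, Finset.mul_sum, Finset.sum_mul]
  congr 1; ext i; congr 1; ext j; ring

lemma vmv_psd {d : ℕ} (x : Fin d → ℝ) : (vecMulVec x x).PosSemidef := by
  rw [posSemidef_iff_dotProduct_mulVec]
  constructor
  · unfold Matrix.IsHermitian; ext i j; simp [vecMulVec, conjTranspose, mul_comm]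
  · intro y
    simp only [star_trivial, RCLike.re_to_real]
    rw [vecMulVec_quad]
    positivity

lemma smul_one_posdef {d : ℕ} {lam : ℝ} (h : 0 < lam) :
    (lam • (1 : Matrix (Fin d) (Fin d) ℝ)).PosDef := by
  have : lam • (1 : Matrix (Fin d) (Fin d) ℝ) = diagonal (fun _ => lam) := by
    ext i j; by_cases hij : i = j <;> simp [hij, diagonal]
  rw [this]
  exact Matrix.PosDef.diagonal (fun _ => h)

lemma det_step {d : ℕ} {A : Matrix (Fin d) (Fin d) ℝ} (hA : A.PosDef) (x : Fin d → ℝ) :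
    (A + vecMulVec x x).det = A.det * (1 + x ⬝ᵥ (A⁻¹ *ᵥ x)) := by
  rw [vecMulVec_eq (Fin 1), det_add_replicateCol_mul_replicateRow hA.det_pos.ne'.isUnit]
  congr 1
  have : replicateRow (Fin 1) x * A⁻¹ * replicateCol (Fin 1) x = of (fun _ _ => x ⬝ᵥ (A⁻¹ *ᵥ x)) := by
    ext i j
    simp [Matrix.mul_apply, replicateRow, replicateCol, mulVec, dotProduct, Finset.mul_sum, Finset.sum_mul]
    rw [Finset.sum_comm]
    congr 1; ext a; congr 1; ext b; ring
  rw [this]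
  simp [Matrix.det_fin_one, Matrix.one_apply]

lemma log_step {u : ℝ} (h0 : 0 ≤ u) (h1 : u ≤ 1) : u ≤ 2 * Real.log (1 + u) := by
  have hpos : (0:ℝ) < 1 + u := by linarith
  have hinv : (0:ℝ) < (1+u)⁻¹ := by positivity
  have hl := Real.log_le_sub_one_of_pos hinv
  rw [Real.log_inv] at hl
  have h2 : u / (1+u) ≤ Real.log (1+u) := by
    have : 1 - (1+u)⁻¹ = u / (1+u) := by field_simp; ring
    linarith
  have h3 : u ≤ 2 * (u / (1+u)) := by
    rw [mul_div_assoc', le_div_iff₀ hpos]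
    nlinarith
  linarith

lemma quad_bound {d : ℕ} {lam : ℝ} (hlam : 1 ≤ lam) {S : Matrix (Fin d) (Fin d) ℝ}
    (hS : S.PosSemidef) {V : Matrix (Fin d) (Fin d) ℝ}
    (hVdef : V = lam • (1 : Matrix (Fin d) (Fin d) ℝ) + S) (hV : V.PosDef)
    {x : Fin d → ℝ} (hx : ∑ i, (x i)^2 ≤ 1) :
    0 ≤ x ⬝ᵥ (V⁻¹ *ᵥ x) ∧ x ⬝ᵥ (V⁻¹ *ᵥ x) ≤ 1 := by
  set y : Fin d → ℝ := V⁻¹ *ᵥ x with hy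
  set q : ℝ := x ⬝ᵥ y with hq
  have hVy : V *ᵥ y = x := by
    rw [hy, Matrix.mulVec_mulVec, Matrix.mul_nonsing_inv _ hV.det_pos.ne'.isUnit,
      Matrix.one_mulVec]
  have hq0 : 0 ≤ q := by
    have := hV.inv.posSemidef.re_dotProduct_nonneg x
    simpa [hq, hy] using this
  have hyVy : y ⬝ᵥ (V *ᵥ y) = q := by
    rw [hVy, hq, dotProduct_comm]
  have hSy : 0 ≤ y ⬝ᵥ (S *ᵥ y) := by
    have := hS.re_dotProduct_nonneg y
    simpa using this
  have hexp : y ⬝ᵥ (V *ᵥ y) = lam * (y ⬝ᵥ y) + y ⬝ᵥ (S *ᵥ y) := by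
    rw [hVdef, add_mulVec, dotProduct_add, smul_mulVec, one_mulVec, dotProduct_smul]
    simp [smul_eq_mul]
  have hlamyy : lam * (y ⬝ᵥ y) ≤ q := by rw [← hyVy, hexp]; linarith
  have hyy0 : 0 ≤ y ⬝ᵥ y := by
    simpa [dotProduct, sq] using Finset.sum_nonneg (fun i _ => mul_self_nonneg (y i))
  have hcs : q^2 ≤ (∑ i, (x i)^2) * (y ⬝ᵥ y) := by
    have := Finset.sum_mul_sq_le_sq_mul_sq Finset.univ x y
    simpa [hq, dotProduct, sq] using this
  have hq2 : q^2 ≤ q := by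
    have h1 : (∑ i, (x i)^2) * (y ⬝ᵥ y) ≤ 1 * (y ⬝ᵥ y) :=
      mul_le_mul_of_nonneg_right hx hyy0
    have h2 : y ⬝ᵥ y ≤ q := by nlinarith
    nlinarith
  exact ⟨hq0, by nlinarith⟩

/-- if `λ ≥ 1` and `‖x_t‖₂ ≤ 1` for all `t`, then
`∑_{t=1}^T ‖x_t‖²_{V_{t-1}⁻¹} ≤ 2 log(det(V_T)/det(λ I))`. -/
theorem sum_sq_norm_le_two_log_det (d T : ℕ) (hd : 0 < d) (hT : 0 < T)
    (lam : ℝ) (hlam : 1 ≤ lam) (x : ℕ → Fin d → ℝ)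
    (hx : ∀ t ∈ Finset.Icc 1 T, Real.sqrt (∑ i, (x t i) ^ 2) ≤ 1)
    (V : ℕ → Matrix (Fin d) (Fin d) ℝ)
    (hV : ∀ t, V t = lam • (1 : Matrix (Fin d) (Fin d) ℝ) +
      ∑ s ∈ Finset.Icc 1 t, vecMulVec (x s) (x s)) :
    ∑ t ∈ Finset.Icc 1 T, (matNorm ((V (t - 1))⁻¹) (x t)) ^ 2 ≤
      2 * Real.log ((V T).det / (lam • (1 : Matrix (Fin d) (Fin d) ℝ)).det) := by
  have hlam0 : (0:ℝ) < lam := lt_of_lt_of_le one_pos hlam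
  -- positive definiteness of all V t
  have hSpsd : ∀ t, (∑ s ∈ Finset.Icc 1 t, vecMulVec (x s) (x s)).PosSemidef := by
    intro t
    induction t with
    | zero => simp [Matrix.PosSemidef.zero]
    | succ k ih =>
      rw [Finset.sum_Icc_succ_top (Nat.one_le_iff_ne_zero.mpr (Nat.succ_ne_zero k))]
      exact ih.add (vmv_psd _)
  have hVpos : ∀ t, (V t).PosDef := fun t => by
    rw [hV t]; exact (smul_one_posdef hlam0).add_posSemidef (hSpsd t)
  -- x squared norm bound on Icc 1 T
  have hx2 : ∀ t ∈ Finset.Icc 1 T, ∑ i, (x t i)^2 ≤ 1 := by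
    intro t ht
    have h := hx t ht
    have hnn : 0 ≤ ∑ i, (x t i)^2 := Finset.sum_nonneg (fun i _ => sq_nonneg _)
    nlinarith [Real.sq_sqrt hnn, Real.sqrt_nonneg (∑ i, (x t i)^2)]
  -- q t
  set q : ℕ → ℝ := fun t => x t ⬝ᵥ ((V (t-1))⁻¹ *ᵥ x t) with hqdef
  have hqbd : ∀ t ∈ Finset.Icc 1 T, 0 ≤ q t ∧ q t ≤ 1 := by
    intro t ht
    exact quad_bound hlam (hSpsd (t-1)) (hV (t-1)) (hVpos (t-1)) (hx2 t ht)
  -- matNorm squared equals q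
  have hmn : ∀ t ∈ Finset.Icc 1 T, (matNorm ((V (t - 1))⁻¹) (x t)) ^ 2 = q t := by
    intro t ht
    exact Real.sq_sqrt (hqbd t ht).1
  -- determinant recursion
  have hdet : ∀ t ∈ Finset.Icc 1 T, (V t).det = (V (t-1)).det * (1 + q t) := by
    intro t ht
    obtain ⟨k, rfl⟩ : ∃ k, t = k + 1 :=
      ⟨t - 1, (Nat.succ_pred_eq_of_pos (Finset.mem_Icc.mp ht).1).symm⟩
    have hVsucc : V (k+1) = V k + vecMulVec (x (k+1)) (x (k+1)) := by
      rw [hV (k+1), hV k,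
        Finset.sum_Icc_succ_top (Nat.one_le_iff_ne_zero.mpr (Nat.succ_ne_zero k)), add_assoc]
    rw [hVsucc, det_step (hVpos k)]
    simp [hqdef]
  -- log step
  have hlog : ∀ t ∈ Finset.Icc 1 T,
      q t ≤ 2 * (Real.log ((V t).det) - Real.log ((V (t-1)).det)) := by
    intro t ht
    obtain ⟨hq0, hq1⟩ := hqbd t ht
    have h1q : (0:ℝ) < 1 + q t := by linarith
    have hld : Real.log ((V t).det) = Real.log ((V (t-1)).det) + Real.log (1 + q t) := by
      rw [hdet t ht, Real.log_mul (hVpos (t-1)).det_pos.ne' h1q.ne']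
    have := log_step hq0 hq1
    linarith
  -- sum up
  calc ∑ t ∈ Finset.Icc 1 T, (matNorm ((V (t - 1))⁻¹) (x t)) ^ 2
      = ∑ t ∈ Finset.Icc 1 T, q t := Finset.sum_congr rfl hmn
    _ ≤ ∑ t ∈ Finset.Icc 1 T,
          2 * (Real.log ((V t).det) - Real.log ((V (t-1)).det)) :=
        Finset.sum_le_sum hlog
    _ = 2 * ∑ t ∈ Finset.Icc 1 T,
          (Real.log ((V t).det) - Real.log ((V (t-1)).det)) := by
        rw [Finset.mul_sum]
    _ = 2 * (Real.log ((V T).det) - Real.log ((V 0).det)) := by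
        congr 1
        rw [← Finset.Ico_add_one_right_eq_Icc, Finset.sum_Ico_eq_sum_range]
        have : ∀ i, Real.log ((V (1+i)).det) - Real.log ((V (1+i-1)).det)
            = (fun n => Real.log ((V n).det)) (i+1) - (fun n => Real.log ((V n).det)) i := by
          intro i; simp [add_comm 1 i]
        rw [Finset.sum_congr rfl (fun i _ => this i)]
        have hTT : T + 1 - 1 = T := Nat.succ_sub_one T
        rw [hTT, Finset.sum_range_sub (fun n => Real.log ((V n).det))]
    _ = 2 * Real.log ((V T).det / (lam • (1 : Matrix (Fin d) (Fin d) ℝ)).det) := by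
        have hV0 : V 0 = lam • (1 : Matrix (Fin d) (Fin d) ℝ) := by
          rw [hV 0]; simp
        rw [hV0, ← Real.log_div (hVpos T).det_pos.ne'
          (by rw [← hV0]; exact (hVpos 0).det_pos.ne')]
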